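/- Let α, β ∈ ℂ and set ψ = (α, β) ∈ ℂ². Define the Bell states Φ₀₀ = (e₀₀ + e₁₁)/√2, Φ₀₁ = (e₀₀ − e₁₁)/√2, Φ₁₀ = (e₀₁ + e₁₀)/√2, Φ₁₁ = (e₀₁ − e₁₀)/√2 as functions Fin 2 × Fin 2 → ℂ, and let X = ![![0,1],![1,0]], Z = ![![1,0],![0,−1]] be the Pauli matrices. Then for all indices a′, a, b ∈ Fin 2: ψ(a′) · Φ₀₀(a, b) = (1/2) · Σ_{s₁, s₂ ∈ {0,1}} Φ_{s₁ s₂}(a′, a) · (X^{s₁} Z^{s₂} ψ)(b). That is, the three-qubit state |ψ⟩ ⊗ |Φ⁺⟩ decomposes componentwise as (1/2) Σ_{s₁ s₂} |Φ_{s₁ s₂}⟩ ⊗ X^{s₁} Z^{s₂} |ψ⟩. -/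

import Mathlib

open Matrix

/-- Standard basis function on `Fin 2 × Fin 2`: value 1 at `(j,k)`, 0 elsewhere. -/
noncomputable def stdBasisFun (j k : Fin 2) : Fin 2 × Fin 2 → ℂ :=
  fun p => if p = (j, k) then 1 else 0

/-- The Bell states `Φ_{s₁ s₂}` as functions `Fin 2 × Fin 2 → ℂ`. -/
noncomputable def BellState (s₁ s₂ : Fin 2) : Fin 2 × Fin 2 → ℂ :=
  if s₁ = 0 then
    (if s₂ = 0 then
      fun p => (stdBasisFun 0 0 p + stdBasisFun 1 1 p) / Real.sqrt 2
    else
      fun p => (stdBasisFun 0 0 p - stdBasisFun 1 1 p) / Real.sqrt 2)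
  else
    (if s₂ = 0 then
      fun p => (stdBasisFun 0 1 p + stdBasisFun 1 0 p) / Real.sqrt 2
    else
      fun p => (stdBasisFun 0 1 p - stdBasisFun 1 0 p) / Real.sqrt 2)

/-- Componentwise teleportation decomposition:
`|ψ⟩ ⊗ |Φ⁺⟩ = (1/2) Σ_{s₁ s₂} |Φ_{s₁ s₂}⟩ ⊗ X^{s₁} Z^{s₂} |ψ⟩`. -/
theorem teleportation_decomposition (α β : ℂ) :
    let ψ : Fin 2 → ℂ := ![α, β]
    let X : Matrix (Fin 2) (Fin 2) ℂ := !![0, 1; 1, 0]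
    let Z : Matrix (Fin 2) (Fin 2) ℂ := !![1, 0; 0, -1]
    ∀ a' a b : Fin 2,
      ψ a' * BellState 0 0 (a, b)
        = (1 / 2 : ℂ) * ∑ s₁ : Fin 2, ∑ s₂ : Fin 2,
            BellState s₁ s₂ (a', a) *
              ((X ^ (s₁ : ℕ) * Z ^ (s₂ : ℕ)).mulVec ψ) b := by
  intro ψ X Z a' a b
  have h2 : ((Real.sqrt 2 : ℝ) : ℂ) * ((Real.sqrt 2 : ℝ) : ℂ) = 2 := by
    rw [← Complex.ofReal_mul, Real.mul_self_sqrt (by norm_num : (0:ℝ) ≤ 2)]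
    norm_num
  have hne : ((Real.sqrt 2 : ℝ) : ℂ) ≠ 0 := by
    intro h
    simp [h] at h2
  fin_cases a' <;> fin_cases a <;> fin_cases b <;>
    simp [BellState, stdBasisFun, ψ, X, Z, Fin.sum_univ_two, mulVec, dotProduct,
      pow_succ, Matrix.mul_apply, Prod.ext_iff] <;>
    field_simp <;>
    ring
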